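/- Let m ≥ 2. Then ∑_{g ∈ E(m)} χ^{F₍₂₎}(g) = 2^{2m+1}, ∑_{g ∈ E(m)} χ^{F₍₃₎}(g) = 2^{2m+1}, and ∑_{g ∈ E(m)} tr(g) · χ^{F₍₂₎}(g) = 2^{2m+1}. Equivalently, ⟨χ^{F₍₂₎}, χ^{F₍₀₎}⟩ = ⟨χ^{F₍₃₎}, χ^{F₍₀₎}⟩ = ⟨χ^{F₍₁₎}, χ^{F₍₂₎}⟩ = 1, i.e. the weight-2 and weight-3 graded pieces of the Heisenberg representation each contain the trivial representation exactly once, and F₍₁₎ ⊗ F₍₂₎ contains the trivial representation exactly once. -/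

import Mathlib

open Matrix

/-- The type of `2^m × 2^m` real matrices, with rows and columns indexed by `𝔽₂^m`. -/
abbrev EMat (m : ℕ) := Matrix (Fin m → Fin 2) (Fin m → Fin 2) ℝ

/-- `pauliR 0 = 1₂`, `pauliR 1 = σ₁`, `pauliR 2 = σ₂`, `pauliR 3 = σ₃ = σ₁ σ₂`. -/
noncomputable def pauliR : Fin 4 → Matrix (Fin 2) (Fin 2) ℝ :=
  ![1, !![0, 1; 1, 0], !![1, 0; 0, -1], !![0, 1; 1, 0] * !![1, 0; 0, -1]]

/-- The Kronecker (tensor) product of `m` matrices of size `2 × 2`. -/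
noncomputable def kprod (m : ℕ) (f : Fin m → Matrix (Fin 2) (Fin 2) ℝ) : EMat m :=
  Matrix.of fun i j => ∏ a, f a (i a) (j a)

/-- The extraspecial group `E(m) = 2_+^{2m+1}`, realized as the set of matrices
`± σ_{i₁} ⊗ ⋯ ⊗ σ_{iₘ}` with each factor in `{1₂, σ₁, σ₂, σ₁σ₂}`. -/
noncomputable def Esp (m : ℕ) : Finset (EMat m) :=
  @Finset.image _ _ (Classical.decEq _)
    (fun p : Bool × (Fin m → Fin 4) =>
      (if p.1 then (-1 : EMat m) else 1) * kprod m fun b => pauliR (p.2 b))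
    Finset.univ

/- ### Auxiliary lemmas -/

noncomputable def sgnP : Fin 4 → ℝ := ![1, 1, 1, -1]

lemma kprod_trace (m : ℕ) (f : Fin m → Matrix (Fin 2) (Fin 2) ℝ) :
    (kprod m f).trace = ∏ a, (f a).trace := by
  simp only [Matrix.trace, Matrix.diag, kprod, Matrix.of_apply, Fintype.prod_sum]

lemma kprod_mul (m : ℕ) (f g : Fin m → Matrix (Fin 2) (Fin 2) ℝ) :
    kprod m f * kprod m g = kprod m fun a => f a * g a := by
  ext i j
  simp only [kprod, Matrix.mul_apply, Matrix.of_apply, ← Finset.prod_mul_distrib,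
    Fintype.prod_sum]

lemma kprod_transpose (m : ℕ) (f : Fin m → Matrix (Fin 2) (Fin 2) ℝ) :
    (kprod m f)ᵀ = kprod m fun a => (f a)ᵀ := by
  ext i j; simp [kprod]

lemma kprod_smul_one (m : ℕ) (c : Fin m → ℝ) :
    kprod m (fun a => c a • 1) = (∏ a, c a) • (1 : EMat m) := by
  ext i j
  simp only [kprod, Matrix.of_apply, Matrix.smul_apply, Matrix.one_apply, smul_eq_mul,
    mul_ite, mul_one, mul_zero]
  have h1 : ∀ x : Fin m, (if i x = j x then c x else 0)
      = c x * (if i x = j x then 1 else 0) := by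
    intro x; split <;> ring
  simp only [h1, Finset.prod_mul_distrib, Finset.prod_boole]
  by_cases h : i = j
  · simp [h]
  · rw [if_neg h, if_neg, mul_zero]
    rw [funext_iff] at h; simpa using h

lemma pauli_sq (v : Fin 4) : pauliR v * pauliR v = sgnP v • 1 := by
  fin_cases v <;> ext i j <;> fin_cases i <;> fin_cases j <;>
    norm_num [pauliR, sgnP, Matrix.mul_apply, Fin.sum_univ_two, Matrix.one_apply]

lemma pauli_trace (v : Fin 4) : (pauliR v).trace = if v = 0 then 2 else 0 := by
  fin_cases v <;>
    norm_num [pauliR, Matrix.one_fin_two, Matrix.mul_fin_two, Matrix.trace_fin_two_of,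
      Fin.ext_iff]

lemma transpose_fin_two (a b c d : ℝ) : !![a, b; c, d]ᵀ = !![a, c; b, d] := by
  ext i j; fin_cases i <;> fin_cases j <;> rfl

lemma pauli_pair (u v : Fin 4) :
    ((pauliR u)ᵀ * pauliR v).trace = if u = v then 2 else 0 := by
  fin_cases u <;> fin_cases v <;>
    norm_num [pauliR, Matrix.trace_fin_two, Matrix.mul_apply, Matrix.transpose_apply,
      Fin.sum_univ_two, Matrix.one_apply, Fin.ext_iff, Matrix.vecHead, Matrix.vecTail]

lemma pair_trace (m : ℕ) (f g : Fin m → Fin 4) :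
    ((kprod m fun a => pauliR (f a))ᵀ * kprod m fun a => pauliR (g a)).trace
      = if f = g then (2 : ℝ) ^ m else 0 := by
  rw [kprod_transpose, kprod_mul, kprod_trace]
  simp only [pauli_pair]
  by_cases h : f = g
  · subst h; simp [Finset.prod_const]
  · rw [if_neg h]
    obtain ⟨a, ha⟩ := Function.ne_iff.mp h
    exact Finset.prod_eq_zero (Finset.mem_univ a) (by simp [ha])

noncomputable def Tf (m : ℕ) (f : Fin m → Fin 4) : ℝ := if f = fun _ => 0 then 2 ^ m else 0

noncomputable def Sf (m : ℕ) (f : Fin m → Fin 4) : ℝ := ∏ a, sgnP (f a)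

lemma traceK (m : ℕ) (f : Fin m → Fin 4) :
    (kprod m fun a => pauliR (f a)).trace = Tf m f := by
  rw [kprod_trace]
  simp only [pauli_trace, Tf]
  by_cases h : f = fun _ => 0
  · rw [if_pos h]
    have : ∀ a, f a = 0 := fun a => by rw [h]
    simp [this, Finset.prod_const]
  · rw [if_neg h]
    obtain ⟨a, ha⟩ := Function.ne_iff.mp h
    exact Finset.prod_eq_zero (Finset.mem_univ a) (by simp [ha])

lemma Ksq (m : ℕ) (f : Fin m → Fin 4) :
    kprod m (fun a => pauliR (f a)) * kprod m (fun a => pauliR (f a)) = Sf m f • 1 := by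
  rw [kprod_mul]
  simp only [pauli_sq]
  exact kprod_smul_one m _

lemma sum_Sf (m : ℕ) : ∑ f : Fin m → Fin 4, Sf m f = 2 ^ m := by
  have h : ∑ f : Fin m → Fin 4, Sf m f = ∏ _a : Fin m, ∑ v : Fin 4, sgnP v :=
    (Fintype.prod_sum _).symm
  rw [h]
  norm_num [sgnP, Fin.sum_univ_four, Finset.prod_const, Matrix.cons_val_two,
    Matrix.cons_val_three]

lemma sum_Tf_sq (m : ℕ) : ∑ f : Fin m → Fin 4, Tf m f ^ 2 = 4 ^ m := by
  have h : ∀ f : Fin m → Fin 4, Tf m f ^ 2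
      = if f = (fun _ => 0) then (4 : ℝ) ^ m else 0 := by
    intro f
    by_cases h : f = fun _ => 0
    · rw [Tf, if_pos h, if_pos h, ← pow_mul, pow_mul']
      norm_num
    · simp [Tf, h]
  simp only [h]
  rw [Finset.sum_ite_eq' Finset.univ (fun _ => (0 : Fin 4)) (fun _ => (4 : ℝ) ^ m)]
  simp

lemma trace_one (m : ℕ) : (1 : EMat m).trace = 2 ^ m := by
  rw [Matrix.trace_one]
  simp [Fintype.card_fun]

lemma two_four_pow (m : ℕ) : (2 : ℝ) * 4 ^ m = 2 ^ (2 * m + 1) := by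
  rw [show (4 : ℝ) = 2 ^ 2 by norm_num, ← pow_mul, pow_succ]
  ring

/-- For `m ≥ 2`: `∑_g χ^{F₍₂₎}(g) = ∑_g χ^{F₍₃₎}(g) = ∑_g tr(g) χ^{F₍₂₎}(g) = 2^(2m+1)`,
where `χ^{F₍₂₎}(g) = tr g + tr(g²)/2 + (tr g)²/2` and
`χ^{F₍₃₎}(g) = tr g + tr(g³)/3 + (tr g)² + tr(g²) tr(g)/2 + (tr g)³/6`; i.e. the weight-2 and
weight-3 graded pieces of the Heisenberg representation each contain the trivial
representation exactly once, and `F₍₁₎ ⊗ F₍₂₎` contains it exactly once. -/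
theorem esp_heisenberg_character_sums (m : ℕ) (hm : 2 ≤ m) :
    ∑ g ∈ Esp m, (g.trace + (g ^ 2).trace / 2 + g.trace ^ 2 / 2) = 2 ^ (2 * m + 1) ∧
    ∑ g ∈ Esp m, (g.trace + (g ^ 3).trace / 3 + g.trace ^ 2 +
      (g ^ 2).trace * g.trace / 2 + g.trace ^ 3 / 6) = 2 ^ (2 * m + 1) ∧
    ∑ g ∈ Esp m, g.trace * (g.trace + (g ^ 2).trace / 2 + g.trace ^ 2 / 2) =
      2 ^ (2 * m + 1) := by
  classical
  set φ : Bool × (Fin m → Fin 4) → EMat m := fun p =>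
    (if p.1 then (-1 : EMat m) else 1) * kprod m fun b => pauliR (p.2 b) with hφ
  have phi_eq : ∀ b f, φ (b, f)
      = (if b then (-1 : ℝ) else 1) • kprod m fun a => pauliR (f a) := by
    intro b f; cases b <;> simp [hφ]
  -- injectivity
  have hinj : ∀ x ∈ (Finset.univ : Finset (Bool × (Fin m → Fin 4))), ∀ y ∈ Finset.univ,
      φ x = φ y → x = y := by
    rintro ⟨b, f⟩ - ⟨c, g⟩ - h
    rw [phi_eq, phi_eq] at h
    have h2 := congrArg (fun M => ((kprod m fun a => pauliR (f a))ᵀ * M).trace) h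
    simp only [Matrix.mul_smul, Matrix.trace_smul, smul_eq_mul, pair_trace,
      eq_self_iff_true, if_true] at h2
    have h2m : (0 : ℝ) < 2 ^ m := by positivity
    have hfg : f = g := by
      by_contra hne
      rw [if_neg hne, mul_zero] at h2
      cases b <;> simp at h2 <;> nlinarith
    subst hfg
    rw [if_pos rfl] at h2
    have hbc := mul_right_cancel₀ (ne_of_gt h2m) h2
    cases b <;> cases c <;> simp_all <;> linarith
  -- traces of φ p and its powers
  have tr1 : ∀ b f, (φ (b, f)).trace = (if b then (-1 : ℝ) else 1) * Tf m f := by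
    intro b f; rw [phi_eq, Matrix.trace_smul, smul_eq_mul, traceK]
  have sq : ∀ b f, φ (b, f) ^ 2 = Sf m f • (1 : EMat m) := by
    intro b f
    rw [pow_two, phi_eq, Matrix.smul_mul, Matrix.mul_smul, smul_smul, Ksq]
    cases b <;> norm_num
  have tr2 : ∀ b f, (φ (b, f) ^ 2).trace = Sf m f * 2 ^ m := by
    intro b f; rw [sq, Matrix.trace_smul, smul_eq_mul, trace_one]
  have tr3 : ∀ b f, (φ (b, f) ^ 3).trace
      = Sf m f * ((if b then (-1 : ℝ) else 1) * Tf m f) := by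
    intro b f
    rw [pow_succ, sq, Matrix.smul_mul, Matrix.one_mul, Matrix.trace_smul, smul_eq_mul, tr1]
  refine ⟨?_, ?_, ?_⟩
  · rw [Esp, ← hφ]
    refine Eq.trans (@Finset.sum_image _ _ _ _ _ (Classical.decEq _) _ _ hinj) ?_
    rw [Fintype.sum_prod_type]
    simp only [tr1, tr2, tr3, Fintype.sum_bool, Bool.false_eq_true, if_true, if_false,
      ← Finset.sum_add_distrib]
    calc _ = ∑ f : Fin m → Fin 4, (Sf m f * 2 ^ m + Tf m f ^ 2) :=
          Finset.sum_congr rfl fun f _ => by ring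
      _ = 2 ^ (2 * m + 1) := by
          rw [Finset.sum_add_distrib, ← Finset.sum_mul, sum_Sf, sum_Tf_sq, ← pow_add,
            show (4 : ℝ) = 2 ^ 2 by norm_num, ← pow_mul, ← two_four_pow m,
            show (4 : ℝ) = 2 ^ 2 by norm_num, ← pow_mul]
          ring
  · rw [Esp, ← hφ]
    refine Eq.trans (@Finset.sum_image _ _ _ _ _ (Classical.decEq _) _ _ hinj) ?_
    rw [Fintype.sum_prod_type]
    simp only [tr1, tr2, tr3, Fintype.sum_bool, Bool.false_eq_true, if_true, if_false,
      ← Finset.sum_add_distrib]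
    calc _ = ∑ f : Fin m → Fin 4, (2 * Tf m f ^ 2) :=
          Finset.sum_congr rfl fun f _ => by ring
      _ = 2 ^ (2 * m + 1) := by rw [← Finset.mul_sum, sum_Tf_sq, two_four_pow]
  · rw [Esp, ← hφ]
    refine Eq.trans (@Finset.sum_image _ _ _ _ _ (Classical.decEq _) _ _ hinj) ?_
    rw [Fintype.sum_prod_type]
    simp only [tr1, tr2, tr3, Fintype.sum_bool, Bool.false_eq_true, if_true, if_false,
      ← Finset.sum_add_distrib]
    calc _ = ∑ f : Fin m → Fin 4, (2 * Tf m f ^ 2) :=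
          Finset.sum_congr rfl fun f _ => by ring
      _ = 2 ^ (2 * m + 1) := by rw [← Finset.mul_sum, sum_Tf_sq, two_four_pow]
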